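/- Let D_min < D* < D_max, T > 0, and define sat(x) := min(D_max, max(D_min, x)). Consider a sequence defined by sampled-data dynamics: η((i+1)T) = η(iT) - (D_i - D*)T where D_i = sat(D* + T⁻¹η(iT) + T⁻¹v(iT)). Then for all integers i ≥ 0: min(0, η(0) + i(D* - D_min)T) + min_{k=0..i} min(0, -v(kT)) ≤ η(iT) ≤ max(0, η(0) - i(D_max - D*)T) + max_{k=0..i} max(0, -v(kT)). -/

import Mathlib

theorem stmt_19 (Dmin Dstar Dmax T : ℝ)
    (h1 : Dmin < Dstar) (h2 : Dstar < Dmax) (hT : 0 < T)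
    (sat : ℝ → ℝ) (hsat : ∀ x, sat x = min Dmax (max Dmin x))
    (η v D : ℕ → ℝ)
    (hD : ∀ i, D i = sat (Dstar + T⁻¹ * η i + T⁻¹ * v i))
    (hrec : ∀ i, η (i + 1) = η i - (D i - Dstar) * T) :
    ∀ i : ℕ,
      min 0 (η 0 + i * (Dstar - Dmin) * T) +
        (Finset.range (i + 1)).inf' Finset.nonempty_range_add_one
          (fun k => min 0 (-(v k))) ≤ η i ∧
      η i ≤ max 0 (η 0 - i * (Dmax - Dstar) * T) +
        (Finset.range (i + 1)).sup' Finset.nonempty_range_add_one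
          (fun k => max 0 (-(v k))) := by
  have hTne : T ≠ 0 := ne_of_gt hT
  have hstep : ∀ i : ℕ,
      (η (i+1) = η i + (Dstar - Dmin) * T ∧ η i + v i ≤ (Dmin - Dstar) * T) ∨
      (η (i+1) = -v i) ∨
      (η (i+1) = η i - (Dmax - Dstar) * T ∧ (Dmax - Dstar) * T ≤ η i + v i) := by
    intro i
    have hkey : (T⁻¹ * η i + T⁻¹ * v i) * T = η i + v i := by field_simp
    have hDi : D i = min Dmax (max Dmin (Dstar + T⁻¹ * η i + T⁻¹ * v i)) := by
      rw [hD i, hsat]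
    have hrec' := hrec i
    rcases le_total (Dstar + T⁻¹ * η i + T⁻¹ * v i) Dmin with h | h
    · left
      have hDmin : D i = Dmin := by rw [hDi, max_eq_left h, min_eq_right (h1.trans h2).le]
      refine ⟨by rw [hrec', hDmin]; ring, ?_⟩
      have h' : T⁻¹ * η i + T⁻¹ * v i ≤ Dmin - Dstar := by linarith
      have h'' := mul_le_mul_of_nonneg_right h' hT.le
      rw [hkey] at h''
      linarith
    · rcases le_total (Dstar + T⁻¹ * η i + T⁻¹ * v i) Dmax with h' | h'
      · right; left
        have hDix : D i = Dstar + T⁻¹ * η i + T⁻¹ * v i := by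
          rw [hDi, max_eq_right h, min_eq_right h']
        have heq : η (i+1) = η i - (T⁻¹ * η i + T⁻¹ * v i) * T := by
          rw [hrec', hDix]; ring
        rw [hkey] at heq
        linarith
      · right; right
        have hDmax : D i = Dmax := by rw [hDi, min_eq_left (le_trans h' (le_max_right _ _))]
        refine ⟨by rw [hrec', hDmax], ?_⟩
        have hge : Dmax - Dstar ≤ T⁻¹ * η i + T⁻¹ * v i := by linarith
        have h'' := mul_le_mul_of_nonneg_right hge hT.le
        rw [hkey] at h''
        linarith
  intro i
  induction i with
  | zero =>
    constructor
    · have hf : (Finset.range (0+1)).inf' Finset.nonempty_range_add_one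
          (fun k => min 0 (-(v k))) ≤ min 0 (-(v 0)) :=
        Finset.inf'_le _ (Finset.self_mem_range_succ 0)
      have h0 : min (0:ℝ) (-(v 0)) ≤ 0 := min_le_left _ _
      have hm := min_le_right (0:ℝ) (η 0 + (0:ℕ) * (Dstar - Dmin) * T)
      push_cast at hm ⊢
      linarith
    · have hf : max 0 (-(v 0)) ≤ (Finset.range (0+1)).sup' Finset.nonempty_range_add_one
          (fun k => max 0 (-(v k))) :=
        Finset.le_sup' (fun k => max 0 (-(v k))) (Finset.self_mem_range_succ 0)
      have h0 : (0:ℝ) ≤ max (0:ℝ) (-(v 0)) := le_max_left _ _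
      have hm := le_max_right (0:ℝ) (η 0 - (0:ℕ) * (Dmax - Dstar) * T)
      push_cast at hm ⊢
      linarith
  | succ i ih =>
    obtain ⟨ihl, ihr⟩ := ih
    -- inf facts
    have hmono_inf : (Finset.range (i+1+1)).inf' Finset.nonempty_range_add_one
        (fun k => min 0 (-(v k))) ≤ (Finset.range (i+1)).inf' Finset.nonempty_range_add_one
        (fun k => min 0 (-(v k))) := by
      apply Finset.le_inf'
      intro b hb
      exact Finset.inf'_le (fun k => min 0 (-(v k))) (Finset.mem_range.mpr (Nat.lt_succ_of_lt (Finset.mem_range.mp hb)))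
    have hinf_i : (Finset.range (i+1+1)).inf' Finset.nonempty_range_add_one
        (fun k => min 0 (-(v k))) ≤ min 0 (-(v i)) :=
      Finset.inf'_le (fun k => min 0 (-(v k))) (Finset.mem_range.mpr (Nat.lt_succ_of_lt (Nat.lt_succ_self i)))
    have hmin_vi : min (0:ℝ) (-(v i)) ≤ -(v i) := min_le_right _ _
    -- sup facts
    have hmono_sup : (Finset.range (i+1)).sup' Finset.nonempty_range_add_one
        (fun k => max 0 (-(v k))) ≤ (Finset.range (i+1+1)).sup' Finset.nonempty_range_add_one
        (fun k => max 0 (-(v k))) := by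
      apply Finset.sup'_le
      intro b hb
      exact Finset.le_sup' (fun k => max 0 (-(v k))) (Finset.mem_range.mpr (Nat.lt_succ_of_lt (Finset.mem_range.mp hb)))
    have hsup_i : max 0 (-(v i)) ≤ (Finset.range (i+1+1)).sup' Finset.nonempty_range_add_one
        (fun k => max 0 (-(v k))) :=
      Finset.le_sup' (fun k => max 0 (-(v k))) (Finset.mem_range.mpr (Nat.lt_succ_of_lt (Nat.lt_succ_self i)))
    have hmax_vi : -(v i) ≤ max (0:ℝ) (-(v i)) := le_max_right _ _
    have hinf_nonpos : (Finset.range (i+1+1)).inf' Finset.nonempty_range_add_one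
        (fun k => min 0 (-(v k))) ≤ 0 :=
      le_trans hinf_i (min_le_left _ _)
    have hsup_nonneg : (0:ℝ) ≤ (Finset.range (i+1+1)).sup' Finset.nonempty_range_add_one
        (fun k => max 0 (-(v k))) :=
      le_trans (le_max_left _ _) hsup_i
    -- min/max shift inequalities
    have hc1 : (0:ℝ) ≤ (Dstar - Dmin) * T := by nlinarith
    have hc2 : (0:ℝ) ≤ (Dmax - Dstar) * T := by nlinarith
    have hmin_shift : min 0 (η 0 + ((i:ℝ)+1) * (Dstar - Dmin) * T) ≤
        min 0 (η 0 + (i:ℝ) * (Dstar - Dmin) * T) + (Dstar - Dmin) * T := by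
      rcases le_total (η 0 + (i:ℝ) * (Dstar - Dmin) * T) 0 with h | h
      · rw [min_eq_right h]
        have := min_le_right (0:ℝ) (η 0 + ((i:ℝ)+1) * (Dstar - Dmin) * T)
        nlinarith
      · rw [min_eq_left h]
        have := min_le_left (0:ℝ) (η 0 + ((i:ℝ)+1) * (Dstar - Dmin) * T)
        linarith
    have hmax_shift : max 0 (η 0 - (i:ℝ) * (Dmax - Dstar) * T) - (Dmax - Dstar) * T ≤
        max 0 (η 0 - ((i:ℝ)+1) * (Dmax - Dstar) * T) := by
      rcases le_total (η 0 - (i:ℝ) * (Dmax - Dstar) * T) 0 with h | h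
      · rw [max_eq_left h]
        have := le_max_left (0:ℝ) (η 0 - ((i:ℝ)+1) * (Dmax - Dstar) * T)
        linarith
      · rw [max_eq_right h]
        have := le_max_right (0:ℝ) (η 0 - ((i:ℝ)+1) * (Dmax - Dstar) * T)
        nlinarith
    have hminle : min (0:ℝ) (η 0 + ((i:ℝ)+1) * (Dstar - Dmin) * T) ≤ 0 := min_le_left _ _
    have hmaxge : (0:ℝ) ≤ max (0:ℝ) (η 0 - ((i:ℝ)+1) * (Dmax - Dstar) * T) := le_max_left _ _
    constructor
    · -- lower bound
      push_cast
      rcases hstep i with ⟨heq, _⟩ | heq | ⟨heq, hge⟩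
      · nlinarith [hmono_inf, hmin_shift, ihl, heq]
      · linarith [hinf_i, hmin_vi, hminle, heq]
      · linarith [hinf_i, hmin_vi, hminle]
    · -- upper bound
      push_cast
      rcases hstep i with ⟨heq, hle⟩ | heq | ⟨heq, _⟩
      · linarith [hsup_i, hmax_vi, hmaxge, hle]
      · linarith [hsup_i, hmax_vi, hmaxge]
      · nlinarith [hmono_sup, hmax_shift, ihr, heq]
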